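/- Let p and q be distinct primes with q ≢ 1 (mod p). On the set B = ℤ/p × ℤ/p × ℤ/q with componentwise addition +, define (x₁,x₂,x₃) ∘ (y₁,y₂,y₃) = (x₁ + y₁ + x₂·y₂, x₂ + y₂, x₃ + y₃). Then (B,+,∘) is a left brace, the kernel of λ has order pq, and (B,∘) is an abelian group isomorphic to ℤ/p × ℤ/p × ℤ/q. Moreover, up to brace isomorphism it is the unique left brace with additive group ℤ/p × ℤ/p × ℤ/q whose kernel of λ has order pq. -/

import Mathlib

/-- `f` is a left-brace multiplication on the abelian group `B`: `(B, f)` is a group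
with identity `0` and `f a (b + c) = f a b - a + f a c` holds. -/
def IsLeftBrace {B : Type*} [AddCommGroup B] (f : B → B → B) : Prop :=
  (∀ a b c, f (f a b) c = f a (f b c)) ∧
  (∀ a, f 0 a = a) ∧
  (∀ a, f a 0 = a) ∧
  (∀ a, ∃ a', f a' a = 0) ∧
  (∀ a b c, f a (b + c) = f a b - a + f a c)

/-- The kernel of `λ`: the set of `a` with `λ_a = id`, i.e. `a ∘ b = a + b` for all `b`. -/
def kerLambda {B : Type*} [AddCommGroup B] (f : B → B → B) : Set B :=
  {a | ∀ b, f a b = a + b}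

/-- The circle operation
`(x₁,x₂,x₃) ∘ (y₁,y₂,y₃) = (x₁ + y₁ + x₂ y₂, x₂ + y₂, x₃ + y₃)` on `ℤ/p × ℤ/p × ℤ/q`. -/
def circ8 (p q : ℕ) :
    ZMod p × ZMod p × ZMod q → ZMod p × ZMod p × ZMod q → ZMod p × ZMod p × ZMod q :=
  fun x y => (x.1 + y.1 + x.2.1 * y.2.1, x.2.1 + y.2.1, x.2.2 + y.2.2)

set_option linter.unusedSectionVars false

instance addAutMulGroupOld {A : Type*} [Add A] : Group (AddAut A) where
  mul g h := AddEquiv.trans h g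
  one := AddEquiv.refl _
  inv := AddEquiv.symm
  mul_assoc _ _ _ := rfl
  one_mul _ := rfl
  mul_one _ := rfl
  inv_mul_cancel := AddEquiv.self_trans_symm

lemma addAut_mul_apply (A : Type*) [Add A] (e₁ e₂ : AddAut A) (m : A) :
    (e₁ * e₂) m = e₁ (e₂ m) := rfl

lemma addAut_one_apply (A : Type*) [Add A] (m : A) : (1 : AddAut A) m = m := rfl


section Infra
variable {B : Type*} [AddCommGroup B]

def Op (_g : B → B → B) : Type _ := B

variable (g : B → B → B)

/-- The group structure on `Op g` when `g` is a left brace multiplication. -/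
noncomputable def opGroupAux (hg : IsLeftBrace g) : Group (Op g) :=
  letI : Mul (Op g) := ⟨g⟩
  letI : One (Op g) := ⟨(0 : B)⟩
  letI : Inv (Op g) := ⟨fun a => (hg.2.2.2.1 a).choose⟩
  Group.ofLeftAxioms hg.1 hg.2.1 (fun a => (hg.2.2.2.1 a).choose_spec)

open Classical in
noncomputable instance Op.instGroup : Group (Op g) :=
  if hg : IsLeftBrace g then opGroupAux g hg
  else inferInstanceAs (Group (Multiplicative B))

lemma opGroup_eq (hg : IsLeftBrace g) : Op.instGroup g = opGroupAux g hg := dif_pos hg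

lemma op_mul (hg : IsLeftBrace g) (a b : Op g) : a * b = g a b := by
  show @HMul.hMul _ _ _ (@instHMul _ (MulOne.toMul)) a b = g a b
  rw [opGroup_eq g hg]
  rfl

lemma op_one (hg : IsLeftBrace g) : (1 : Op g) = (0 : B) := by
  show @One.one (Op g) _ = (0 : B)
  rw [opGroup_eq g hg]
  rfl

end Infra

section Ops
variable {B : Type*} [AddCommGroup B] (g : B → B → B)

def mkOp : B → Op g := fun x => x
def ofOp : Op g → B := fun x => x

@[simp] lemma ofOp_mkOp (x : B) : ofOp g (mkOp g x) = x := rfl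
@[simp] lemma mkOp_ofOp (a : Op g) : mkOp g (ofOp g a) = a := rfl

lemma op_mul' (hg : IsLeftBrace g) (a b : Op g) :
    ofOp g (a * b) = g (ofOp g a) (ofOp g b) := op_mul g hg a b

lemma op_one' (hg : IsLeftBrace g) : ofOp g (1 : Op g) = 0 := op_one g hg

variable (hg : IsLeftBrace g)
include hg

/-- A canonical circle-inverse. -/
noncomputable def cinv (a : B) : B := (hg.2.2.2.1 a).choose

lemma g_cinv_left (a : B) : g (cinv g hg a) a = 0 := (hg.2.2.2.1 a).choose_spec

lemma g_cinv_right (a : B) : g a (cinv g hg a) = 0 := by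
  have h1 := g_cinv_left g hg a
  have h2 := g_cinv_left g hg (cinv g hg a)
  have h3 : a = cinv g hg (cinv g hg a) := by
    calc a = g 0 a := (hg.2.1 a).symm
    _ = g (g (cinv g hg (cinv g hg a)) (cinv g hg a)) a := by rw [h2]
    _ = g (cinv g hg (cinv g hg a)) (g (cinv g hg a) a) := hg.1 _ _ _
    _ = cinv g hg (cinv g hg a) := by rw [h1]; exact hg.2.2.1 _
  nth_rewrite 1 [h3]
  exact g_cinv_left g hg _

lemma op_inv' (a : Op g) : ofOp g a⁻¹ = cinv g hg (ofOp g a) := by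
  have h1 : g (ofOp g a⁻¹) (ofOp g a) = 0 := by
    rw [← op_mul' g hg, inv_mul_cancel, op_one' g hg]
  calc ofOp g a⁻¹ = g (ofOp g a⁻¹) 0 := (hg.2.2.1 _).symm
  _ = g (ofOp g a⁻¹) (g (ofOp g a) (cinv g hg (ofOp g a))) := by
        rw [g_cinv_right g hg]
  _ = g (g (ofOp g a⁻¹) (ofOp g a)) (cinv g hg (ofOp g a)) := (hg.1 _ _ _).symm
  _ = cinv g hg (ofOp g a) := by rw [h1]; exact hg.2.1 _

lemma g_neg (a b : B) : g a (-b) = a - g a b + a := by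
  have h := hg.2.2.2.2 a b (-b)
  rw [add_neg_cancel, hg.2.2.1 a] at h
  calc g a (-b) = (g a b - a + g a (-b)) - g a b + a := by abel
  _ = a - g a b + a := by rw [← h]

noncomputable def lamAut (a : B) : AddAut B where
  toFun b := g a b - a
  invFun b := g (cinv g hg a) (a + b)
  left_inv b := by
    show g (cinv g hg a) (a + (g a b - a)) = b
    have h1 : a + (g a b - a) = g a b := by abel
    rw [h1, ← hg.1, g_cinv_left g hg, hg.2.1]
  right_inv b := by
    show g a (g (cinv g hg a) (a + b)) - a = b
    rw [← hg.1 a, g_cinv_right g hg, hg.2.1]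
    abel
  map_add' b c := by
    show g a (b + c) - a = (g a b - a) + (g a c - a)
    rw [hg.2.2.2.2 a b c]
    abel

lemma lamAut_apply (a b : B) : lamAut g hg a b = g a b - a := rfl

lemma lamAut_zero : lamAut g hg 0 = 1 := by
  ext b
  rw [lamAut_apply, addAut_one_apply, hg.2.1, sub_zero]

lemma lamAut_mul (x y : B) : lamAut g hg (g x y) = lamAut g hg x * lamAut g hg y := by
  ext c
  rw [addAut_mul_apply, lamAut_apply, lamAut_apply, lamAut_apply]
  have h1 : g y c - y = g y c + -y := by abel
  rw [h1, hg.2.2.2.2 x (g y c) (-y), g_neg g hg, hg.1]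
  abel

noncomputable def lam : Op g →* AddAut B where
  toFun a := lamAut g hg (ofOp g a)
  map_one' := by
    show lamAut g hg (ofOp g (1 : Op g)) = 1
    rw [op_one' g hg, lamAut_zero g hg]
  map_mul' a b := by
    show lamAut g hg (ofOp g (a * b)) = lamAut g hg (ofOp g a) * lamAut g hg (ofOp g b)
    rw [op_mul' g hg, lamAut_mul g hg]

lemma lam_apply (a : Op g) (b : B) : lam g hg a b = g (ofOp g a) b - ofOp g a := rfl

lemma g_eq_add_lam (a : Op g) (b : B) : g (ofOp g a) b = ofOp g a + lam g hg a b := by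
  rw [lam_apply]; abel

end Ops

section Helpers
variable {B : Type*} [AddCommGroup B]

lemma zsmul_congr (r : ℕ) (x : B) (hx : r • x = 0) {m n : ℤ}
    (h : ((m : ZMod r)) = ((n : ZMod r))) : m • x = n • x := by
  have hd : (r : ℤ) ∣ m - n := by
    have h0 : ((m - n : ℤ) : ZMod r) = 0 := by push_cast [h]; ring
    exact (ZMod.intCast_zmod_eq_zero_iff_dvd _ _).1 h0
  obtain ⟨t, ht⟩ := hd
  have hm : m = n + r * t := by linarith
  rw [hm, add_zsmul]
  have h1 : ((r : ℤ) * t) • x = t • ((r : ℤ) • x) := by rw [mul_comm, mul_zsmul]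
  rw [h1, natCast_zsmul, hx, smul_zero, add_zero]

lemma nsmul_congr (r : ℕ) (x : B) (hx : r • x = 0) {m n : ℕ}
    (h : ((m : ZMod r)) = ((n : ZMod r))) : m • x = n • x := by
  have h2 : (((m : ℤ) : ZMod r)) = (((n : ℤ) : ZMod r)) := by push_cast; exact_mod_cast h
  have := zsmul_congr r x hx h2
  simpa [natCast_zsmul] using this

lemma nsmul_inj (r : ℕ) (x : B) (hord : addOrderOf x = r) {m n : ℕ}
    (h : m • x = n • x) : (m : ZMod r) = (n : ZMod r) := by
  have h1 : ((m : ℤ) - n) • x = 0 := by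
    rw [sub_zsmul, natCast_zsmul, natCast_zsmul, h, add_neg_cancel]
  have h2 := addOrderOf_dvd_iff_zsmul_eq_zero.2 h1
  rw [hord] at h2
  have h3 : (((m : ℤ) - n : ℤ) : ZMod r) = 0 := (ZMod.intCast_zmod_eq_zero_iff_dvd _ _).2 h2
  push_cast at h3
  exact sub_eq_zero.1 h3

lemma zsmul_inj (r : ℕ) (x : B) (hord : addOrderOf x = r) {m n : ℤ}
    (h : m • x = n • x) : (m : ZMod r) = (n : ZMod r) := by
  have h1 : (m - n) • x = 0 := by rw [sub_zsmul, h, add_neg_cancel]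
  have h2 := addOrderOf_dvd_iff_zsmul_eq_zero.2 h1
  rw [hord] at h2
  have h3 : ((m - n : ℤ) : ZMod r) = 0 := (ZMod.intCast_zmod_eq_zero_iff_dvd _ _).2 h2
  push_cast at h3
  exact sub_eq_zero.1 h3

lemma val_natCast_zmod {r : ℕ} [NeZero r] (x : ZMod r) : ((x.val : ZMod r)) = x := by
  simp [ZMod.natCast_val, ZMod.cast_id]

end Helpers

set_option maxHeartbeats 1600000 in
theorem unique_brace (p q : ℕ) (hp : p.Prime) (hq : q.Prime) (hpq : p ≠ q)
    (hmod : ¬ q ≡ 1 [MOD p])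
    (g : ZMod p × ZMod p × ZMod q → ZMod p × ZMod p × ZMod q → ZMod p × ZMod p × ZMod q)
    (hg : IsLeftBrace g) (hK : Nat.card ↥(kerLambda g) = p * q) :
    ∃ e : ZMod p × ZMod p × ZMod q ≃ ZMod p × ZMod p × ZMod q,
      (∀ a b, e (a + b) = e a + e b) ∧ ∀ a b, e (g a b) = circ8 p q (e a) (e b) := by
  haveI fp : Fact p.Prime := ⟨hp⟩
  haveI fq : Fact q.Prime := ⟨hq⟩
  haveI : NeZero p := ⟨hp.ne_zero⟩
  haveI : NeZero q := ⟨hq.ne_zero⟩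
  have hpdq : ¬ (p ∣ q) := fun h => hpq ((Nat.prime_dvd_prime_iff_eq hp hq).1 h)
  have hqdp : ¬ (q ∣ p) := fun h => hpq ((Nat.prime_dvd_prime_iff_eq hq hp).1 h).symm
  have hqp0 : (q : ZMod p) ≠ 0 := by
    rw [Ne, ZMod.natCast_eq_zero_iff]; exact hpdq
  have hpq0 : (p : ZMod q) ≠ 0 := by
    rw [Ne, ZMod.natCast_eq_zero_iff]; exact hqdp
  have cardB : Nat.card (ZMod p × ZMod p × ZMod q) = p * (p * q) := by
    simp [Nat.card_prod, Nat.card_zmod]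
  -- the kernel of lambda as an additive subgroup
  let K : AddSubgroup (ZMod p × ZMod p × ZMod q) :=
    { carrier := kerLambda g
      zero_mem' := fun b => by rw [hg.2.1, zero_add]
      add_mem' := by
        intro a b ha hb c
        calc g (a + b) c = g (g a b) c := by rw [ha b]
        _ = g a (g b c) := hg.1 _ _ _
        _ = g a (b + c) := by rw [hb c]
        _ = a + (b + c) := ha _
        _ = a + b + c := (add_assoc _ _ _).symm
      neg_mem' := by
        intro a ha
        have h1 : g a (-a) = 0 := by rw [ha (-a), add_neg_cancel]
        have h2 : cinv g hg a = -a := by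
          calc cinv g hg a = g (cinv g hg a) 0 := (hg.2.2.1 _).symm
          _ = g (cinv g hg a) (g a (-a)) := by rw [h1]
          _ = g (g (cinv g hg a) a) (-a) := (hg.1 _ _ _).symm
          _ = g 0 (-a) := by rw [g_cinv_left g hg]
          _ = -a := hg.2.1 _
        intro c
        calc g (-a) c = g (-a) (g a (-a + c)) := by rw [ha (-a + c), add_neg_cancel_left]
        _ = g (g (-a) a) (-a + c) := (hg.1 _ _ _).symm
        _ = g 0 (-a + c) := by rw [← h2, g_cinv_left g hg]
        _ = -a + c := hg.2.1 _ }
  have hKmem : ∀ x, x ∈ K ↔ ∀ b, g x b = x + b := fun _ => Iff.rfl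
  have cardK : Nat.card ↥K = p * q := hK
  -- kernel of lam is K
  have hkerK : ∀ a : Op g, lam g hg a = 1 ↔ ofOp g a ∈ K := by
    intro a
    constructor
    · intro h b
      have hb := DFunLike.congr_fun h b
      rw [lam_apply, addAut_one_apply] at hb
      rw [sub_eq_iff_eq_add'] at hb
      exact hb
    · intro h
      refine DFunLike.ext _ _ fun b => ?_
      rw [lam_apply, addAut_one_apply, h b, add_sub_cancel_left]
  haveI : Finite (Op g) := inferInstanceAs (Finite (ZMod p × ZMod p × ZMod q))
  have cardOp : Nat.card (Op g) = p * (p * q) := by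
    rw [← cardB]; exact Nat.card_congr ⟨ofOp g, mkOp g, fun _ => rfl, fun _ => rfl⟩
  have cardKer : Nat.card ↥(lam g hg).ker = p * q := by
    rw [← cardK]
    refine Nat.card_congr ⟨fun x => ⟨ofOp g x.1, (hkerK x.1).1 (MonoidHom.mem_ker.1 x.2)⟩,
      fun y => ⟨mkOp g y.1, MonoidHom.mem_ker.2 ((hkerK _).2 (by rw [ofOp_mkOp]; exact y.2))⟩,
      fun _ => rfl, fun _ => rfl⟩
  have cardRange : Nat.card ↥(lam g hg).range = p := by
    have h1 := Subgroup.card_eq_card_quotient_mul_card_subgroup (lam g hg).ker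
    have h2 : Nat.card (Op g ⧸ (lam g hg).ker) = Nat.card ↥(lam g hg).range :=
      Nat.card_congr (QuotientGroup.quotientKerEquivRange (lam g hg)).toEquiv
    rw [h2, cardKer, cardOp] at h1
    have hpos : 0 < p * q := Nat.mul_pos hp.pos hq.pos
    have h3 : p * (p * q) = p * q * p := by ring
    rw [h3] at h1
    exact (Nat.eq_of_mul_eq_mul_left hpos (by linarith [h1])).symm
  have hpow : ∀ a : Op g, (lam g hg a) ^ p = 1 := by
    intro a
    have hmem : lam g hg a ∈ (lam g hg).range := ⟨a, rfl⟩
    have h1 := pow_card_eq_one' (x := (⟨lam g hg a, hmem⟩ : ↥(lam g hg).range))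
    rw [cardRange] at h1
    have h2 := congrArg (Subtype.val) h1
    rwa [Subgroup.coe_pow] at h2
  -- lambda fixes the q-torsion part pointwise
  have hq1 : q • ((0, 0, (1 : ZMod q)) : ZMod p × ZMod p × ZMod q) = 0 := by
    have : q • ((0, 0, (1 : ZMod q)) : ZMod p × ZMod p × ZMod q)
        = (q • (0 : ZMod p), q • (0 : ZMod p), q • (1 : ZMod q)) := rfl
    rw [this, smul_zero, Prod.mk_eq_zero, Prod.mk_eq_zero]
    refine ⟨rfl, rfl, ?_⟩
    rw [nsmul_eq_mul, mul_one, ZMod.natCast_self]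
  have hW : ∀ a : Op g, lam g hg a ((0, 0, 1) : ZMod p × ZMod p × ZMod q)
      = (0, 0, (lam g hg a ((0,0,1) : ZMod p × ZMod p × ZMod q)).2.2) := by
    intro a
    set w := lam g hg a ((0,0,1) : ZMod p × ZMod p × ZMod q) with hw
    have h1 : q • w = 0 := by
      rw [hw, ← map_nsmul, hq1, map_zero]
    have h2 : (q : ZMod p) * w.1 = 0 := by
      have := congrArg Prod.fst h1
      rwa [Prod.smul_fst, nsmul_eq_mul] at this
    have h3 : (q : ZMod p) * w.2.1 = 0 := by
      have := congrArg (fun x => x.2.1) h1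
      simp only [Prod.smul_snd, Prod.smul_fst] at this
      rwa [nsmul_eq_mul] at this
    have hw1 : w.1 = 0 := by
      rcases mul_eq_zero.1 h2 with h | h
      · exact absurd h hqp0
      · exact h
    have hw2 : w.2.1 = 0 := by
      rcases mul_eq_zero.1 h3 with h | h
      · exact absurd h hqp0
      · exact h
    exact Prod.ext hw1 (Prod.ext hw2 rfl)
  have hone_zmodq : ∀ z : ZMod q, ((z.val : ZMod q)) = z := fun z => val_natCast_zmod z
  have hAct : ∀ (a : Op g) (z : ZMod q),
      lam g hg a ((0, 0, z) : ZMod p × ZMod p × ZMod q)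
        = (0, 0, z * (lam g hg a ((0,0,1) : ZMod p × ZMod p × ZMod q)).2.2) := by
    intro a z
    have h1 : ((0, 0, z) : ZMod p × ZMod p × ZMod q) = z.val • ((0,0,1) : ZMod p × ZMod p × ZMod q) := by
      have : z.val • ((0,0,1) : ZMod p × ZMod p × ZMod q)
          = (z.val • (0:ZMod p), z.val • (0:ZMod p), z.val • (1:ZMod q)) := rfl
      rw [this, smul_zero, nsmul_eq_mul, mul_one, hone_zmodq]
    rw [h1, map_nsmul, hW a]
    have : z.val • ((0:ZMod p), (0:ZMod p), (lam g hg a ((0,0,1) : ZMod p × ZMod p × ZMod q)).2.2)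
        = (z.val • (0:ZMod p), z.val • (0:ZMod p),
            z.val • (lam g hg a ((0,0,1) : ZMod p × ZMod p × ZMod q)).2.2) := rfl
    rw [this, smul_zero, nsmul_eq_mul, hone_zmodq]
  -- the multiplicative character into ZMod q
  set U : Op g → ZMod q := fun a => (lam g hg a ((0,0,1) : ZMod p × ZMod p × ZMod q)).2.2 with hU
  have hWU : ∀ a : Op g, lam g hg a ((0,0,1) : ZMod p × ZMod p × ZMod q) = (0,0, U a) := hW
  have hU1 : U 1 = 1 := by
    rw [hU]
    simp only [map_one, addAut_one_apply]
  have hUmul : ∀ a b : Op g, U (a * b) = U a * U b := by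
    intro a b
    have h1 : lam g hg (a * b) ((0,0,1) : ZMod p × ZMod p × ZMod q)
        = lam g hg a (lam g hg b ((0,0,1) : ZMod p × ZMod p × ZMod q)) := by
      rw [map_mul, addAut_mul_apply]
    rw [hWU b, hAct a (U b)] at h1
    have h2 := congrArg (fun x => x.2.2) h1
    simp only at h2
    exact h2.trans (mul_comm _ _)
  have hUpow : ∀ (a : Op g) (n : ℕ), U (a ^ n) = (U a) ^ n := by
    intro a n
    induction n with
    | zero => rw [pow_zero, pow_zero, hU1]
    | succ k ih => rw [pow_succ, pow_succ, hUmul, ih]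
  have hUne : ∀ a : Op g, U a ≠ 0 := by
    intro a h
    have h1 : lam g hg a ((0,0,1) : ZMod p × ZMod p × ZMod q) = 0 := by
      rw [hWU a, h]; rfl
    have h2 : lam g hg a (0 : ZMod p × ZMod p × ZMod q) = 0 := map_zero _
    have := (lam g hg a).injective (h1.trans h2.symm)
    have h3 := congrArg (fun x => x.2.2) this
    simp only at h3
    exact one_ne_zero h3
  have hUone : ∀ a : Op g, U a = 1 := by
    intro a
    have h1 : (U a) ^ (p * (p * q)) = 1 := by
      rw [← hUpow, ← cardOp, pow_card_eq_one', hU1]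
    have h2 : (U a) ^ (q - 1) = 1 := ZMod.pow_card_sub_one_eq_one (hUne a)
    have ho1 : orderOf (U a) ∣ p * (p * q) := orderOf_dvd_iff_pow_eq_one.2 h1
    have ho2 : orderOf (U a) ∣ q - 1 := orderOf_dvd_iff_pow_eq_one.2 h2
    have hcp : Nat.Coprime (p * (p * q)) (q - 1) := by
      have hc1 : Nat.Coprime p (q - 1) := by
        refine hp.coprime_iff_not_dvd.2 fun hd => hmod ?_
        exact ((Nat.modEq_iff_dvd' hq.one_le).2 hd).symm
      have hc2 : Nat.Coprime q (q - 1) := by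
        have hq2 := hq.two_le
        refine hq.coprime_iff_not_dvd.2 fun hd => ?_
        have h4 := Nat.le_of_dvd (by omega) hd
        omega
      exact hc1.mul (hc1.mul hc2)
    have : orderOf (U a) ∣ 1 := Nat.dvd_one.2 (Nat.eq_one_of_dvd_coprimes hcp ho1 ho2)
    rw [Nat.dvd_one] at this
    exact orderOf_eq_one_iff.1 this
  have hUone' : ∀ a : Op g, (lam g hg a ((0,0,1) : ZMod p × ZMod p × ZMod q)).2.2 = 1 := hUone
  have hfixT : ∀ (a : Op g) (z : ZMod q),
      lam g hg a ((0, 0, z) : ZMod p × ZMod p × ZMod q) = (0, 0, z) := by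
    intro a z
    rw [hAct a z, hUone' a, mul_one]
  -- Cauchy elements in K
  haveI : Fintype ↥K := Fintype.ofFinite _
  have hcardK' : Fintype.card ↥K = p * q := by
    rw [← Nat.card_eq_fintype_card, cardK]
  obtain ⟨t, ht⟩ := exists_prime_addOrderOf_dvd_card (G := ↥K) q
    (by rw [hcardK']; exact dvd_mul_left q p)
  have htq : q • (t : ZMod p × ZMod p × ZMod q) = 0 := by
    have h1 : addOrderOf t • t = 0 := addOrderOf_nsmul_eq_zero t
    rw [ht] at h1
    calc q • (t : ZMod p × ZMod p × ZMod q) = K.subtype (q • t) := (map_nsmul K.subtype q t).symm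
    _ = 0 := by rw [h1, map_zero]
  have ht0 : (t : ZMod p × ZMod p × ZMod q) ≠ 0 := by
    intro h
    have h1 : t = (0 : ↥K) := Subtype.ext h
    rw [h1] at ht
    rw [addOrderOf_zero] at ht
    exact hq.one_lt.ne ht
  have htc1 : (t : ZMod p × ZMod p × ZMod q).1 = 0 := by
    have h2 := congrArg Prod.fst htq
    rw [Prod.smul_fst, nsmul_eq_mul] at h2
    rcases mul_eq_zero.1 h2 with h | h
    · exact absurd h hqp0
    · exact h
  have htc2 : (t : ZMod p × ZMod p × ZMod q).2.1 = 0 := by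
    have h2 := congrArg (fun x => x.2.1) htq
    simp only [Prod.smul_snd, Prod.smul_fst] at h2
    rw [nsmul_eq_mul] at h2
    rcases mul_eq_zero.1 h2 with h | h
    · exact absurd h hqp0
    · exact h
  set c : ZMod q := (t : ZMod p × ZMod p × ZMod q).2.2 with hc
  have htval : (t : ZMod p × ZMod p × ZMod q) = (0, 0, c) :=
    Prod.ext htc1 (Prod.ext htc2 rfl)
  have hc0 : c ≠ 0 := by
    intro h
    apply ht0
    rw [htval, h]
    rfl
  have hTq : ∀ z : ZMod q, ((0, 0, z) : ZMod p × ZMod p × ZMod q) ∈ K := by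
    intro z
    have h1 : ((0,0,z) : ZMod p × ZMod p × ZMod q)
        = (z * c⁻¹).val • ((t : ZMod p × ZMod p × ZMod q)) := by
      rw [htval]
      have h2 : (z * c⁻¹).val • ((0,0,c) : ZMod p × ZMod p × ZMod q)
          = ((z * c⁻¹).val • (0:ZMod p), (z * c⁻¹).val • (0:ZMod p), (z * c⁻¹).val • c) := rfl
      rw [h2, smul_zero, nsmul_eq_mul, val_natCast_zmod, mul_assoc, inv_mul_cancel₀ hc0, mul_one]
    rw [h1]
    exact nsmul_mem t.2 _
  -- element of order p in K
  obtain ⟨s, hs⟩ := exists_prime_addOrderOf_dvd_card (G := ↥K) p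
    (by rw [hcardK']; exact dvd_mul_right p q)
  set e : ZMod p × ZMod p × ZMod q := (s : ZMod p × ZMod p × ZMod q) with he
  have heK : e ∈ K := s.2
  have hep : p • e = 0 := by
    have h1 : addOrderOf s • s = 0 := addOrderOf_nsmul_eq_zero s
    rw [hs] at h1
    calc p • e = K.subtype (p • s) := (map_nsmul K.subtype p s).symm
    _ = 0 := by rw [h1, map_zero]
  have he0 : e ≠ 0 := by
    intro h
    have h1 : s = (0 : ↥K) := Subtype.ext h
    rw [h1, addOrderOf_zero] at hs
    exact hp.one_lt.ne hs
  have horde : addOrderOf e = p := addOrderOf_eq_prime hep he0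
  have he3 : e.2.2 = 0 := by
    have h2 := congrArg (fun x => x.2.2) hep
    simp only [Prod.smul_snd] at h2
    rw [nsmul_eq_mul] at h2
    rcases mul_eq_zero.1 h2 with h | h
    · exact absurd h hpq0
    · exact h
  -- structure of K
  have hKstruct : ∀ k ∈ K, ∃ (m : ZMod p) (z : ZMod q), k = m.val • e + (0, 0, z) := by
    have hF0 : ∀ mz : ZMod p × ZMod q,
        mz.1.val • e + ((0,0,mz.2) : ZMod p × ZMod p × ZMod q) ∈ K :=
      fun mz => K.add_mem (nsmul_mem heK _) (hTq _)
    set F0 : ZMod p × ZMod q → ↥K := fun mz => ⟨mz.1.val • e + (0,0,mz.2), hF0 mz⟩ with hF0def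
    have hinj : Function.Injective F0 := by
      intro x y hxy
      have h1 : x.1.val • e + ((0,0,x.2) : ZMod p × ZMod p × ZMod q)
          = y.1.val • e + (0,0,y.2) := congrArg Subtype.val hxy
      have h3 : x.2 = y.2 := by
        have h2 := congrArg (fun v => v.2.2) h1
        simp only [Prod.fst_add, Prod.snd_add, Prod.smul_snd] at h2
        rw [nsmul_eq_mul, nsmul_eq_mul, he3, mul_zero, mul_zero] at h2
        simpa using h2
      rw [h3] at h1
      have h4 : x.1.val • e = y.1.val • e := by
        have := add_right_cancel h1
        exact this
      have h5 := nsmul_inj p e horde h4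
      rw [val_natCast_zmod, val_natCast_zmod] at h5
      exact Prod.ext h5 (by rw [h3])
    have hbij : Function.Bijective F0 := by
      refine (Nat.bijective_iff_injective_and_card F0).2 ⟨hinj, ?_⟩
      rw [Nat.card_prod, Nat.card_zmod, Nat.card_zmod, cardK]
    intro k hk
    obtain ⟨⟨m, z⟩, hmz⟩ := hbij.2 ⟨k, hk⟩
    refine ⟨m, z, ?_⟩
    have := congrArg Subtype.val hmz
    exact this.symm
  -- lambda-invariance of K
  have hKinv : ∀ (a : Op g) (k : ZMod p × ZMod p × ZMod q), k ∈ K → lam g hg a k ∈ K := by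
    intro a k hk
    have hofOp : ofOp g (a * mkOp g k * a⁻¹) = lam g hg a k := by
      rw [op_mul' g hg, op_mul' g hg, ofOp_mkOp, op_inv' g hg]
      rw [hg.1, hk _, hg.2.2.2.2, g_cinv_right g hg, lam_apply]
      abel
    have hconj : mkOp g (lam g hg a k) = a * mkOp g k * a⁻¹ := by
      calc mkOp g (lam g hg a k) = mkOp g (ofOp g (a * mkOp g k * a⁻¹)) := by rw [hofOp]
      _ = a * mkOp g k * a⁻¹ := mkOp_ofOp g _
    have hlam1 : lam g hg (mkOp g k) = 1 := (hkerK _).2 (by rw [ofOp_mkOp]; exact hk)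
    have h2 : lam g hg (mkOp g (lam g hg a k)) = 1 := by
      rw [hconj, map_mul, map_mul, hlam1, map_inv, mul_one, mul_inv_cancel]
    have h3 := (hkerK _).1 h2
    rwa [ofOp_mkOp] at h3
  -- lambda fixes e
  have hfixe : ∀ a : Op g, lam g hg a e = e := by
    intro a
    have h1 : lam g hg a e ∈ K := hKinv a e heK
    have h2 : p • lam g hg a e = 0 := by rw [← map_nsmul, hep, map_zero]
    obtain ⟨m, z, hmz⟩ := hKstruct _ h1
    have h4 : p • (m.val • e + ((0,0,z) : ZMod p × ZMod p × ZMod q)) = 0 := by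
      rw [← hmz]; exact h2
    rw [smul_add] at h4
    have h5 : p • (m.val • e) = 0 := by rw [smul_comm, hep, smul_zero]
    rw [h5, zero_add] at h4
    have h6 := congrArg (fun v => v.2.2) h4
    simp only [Prod.smul_snd] at h6
    rw [nsmul_eq_mul] at h6
    have hz0 : z = 0 := by
      rcases mul_eq_zero.1 h6 with h | h
      · exact absurd h hpq0
      · exact h
    rw [hz0] at hmz
    have hz00 : ((0,0,(0:ZMod q)) : ZMod p × ZMod p × ZMod q) = 0 := rfl
    rw [hz00, add_zero] at hmz
    have hiter : ∀ j : ℕ, ((lam g hg a) ^ j) e = (m.val ^ j) • e := by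
      intro j
      induction j with
      | zero => rw [pow_zero, pow_zero, one_smul]; rfl
      | succ k ih =>
        rw [pow_succ, addAut_mul_apply, hmz, map_nsmul, ih, smul_smul, ← pow_succ']
    have h7 : (m.val ^ p) • e = (1 : ℕ) • e := by
      rw [← hiter, hpow a, one_smul]; rfl
    have h8 := nsmul_inj p e horde h7
    push_cast at h8
    rw [val_natCast_zmod] at h8
    rw [ZMod.pow_card] at h8
    have h9 : (m.val : ZMod p) = ((1:ℕ) : ZMod p) := by
      rw [val_natCast_zmod, h8]; push_cast; rfl
    rw [hmz, nsmul_congr p e hep h9, one_smul]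
  -- lambda fixes K pointwise
  have hfixK : ∀ (a : Op g) (k : ZMod p × ZMod p × ZMod q), k ∈ K → lam g hg a k = k := by
    intro a k hk
    obtain ⟨m, z, hmz⟩ := hKstruct k hk
    rw [hmz, map_add, map_nsmul, hfixe, hfixT]
  -- an element outside K
  have hex : ∃ a₀ : ZMod p × ZMod p × ZMod q, a₀ ∉ K := by
    by_contra h
    push_neg at h
    have hKtop : K = ⊤ := by
      ext x; simp [h x]
    have hcard : Nat.card ↥K = Nat.card (ZMod p × ZMod p × ZMod q) := by
      rw [hKtop]
      exact Nat.card_congr AddSubgroup.topEquiv.toEquiv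
    rw [cardK, cardB] at hcard
    have hpos : 0 < p * q := Nat.mul_pos hp.pos hq.pos
    have : p * q * 1 = p * q * p := by linarith [hcard]
    have := Nat.eq_of_mul_eq_mul_left hpos this
    exact hp.one_lt.ne this
  obtain ⟨a₀, ha₀⟩ := hex
  set f : AddAut (ZMod p × ZMod p × ZMod q) := lam g hg (mkOp g a₀) with hf
  have hf1 : f ≠ 1 := by
    intro h
    apply ha₀
    have := (hkerK _).1 h
    rwa [ofOp_mkOp] at this
  have hfp : f ^ p = 1 := hpow _
  have hordf : orderOf f = p := orderOf_eq_prime hfp hf1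
  -- the additive endomorphism N
  set N : (ZMod p × ZMod p × ZMod q) →+ (ZMod p × ZMod p × ZMod q) :=
    AddMonoidHom.mk' (fun b => f b - b) (fun x y => by
      show f (x + y) - (x + y) = (f x - x) + (f y - y)
      rw [map_add]; abel) with hN
  have hNapp : ∀ b, N b = f b - b := fun _ => rfl
  have hfNb : ∀ b, f b = b + N b := by intro b; rw [hNapp]; abel
  -- N vanishes exactly on K
  have hNK : ∀ k ∈ K, N k = 0 := by
    intro k hk
    rw [hNapp, hfixK _ k hk, sub_self]
  have hKle : K ≤ N.ker := fun k hk => AddMonoidHom.mem_ker.2 (hNK k hk)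
  have htopcard : Nat.card ↥(⊤ : AddSubgroup (ZMod p × ZMod p × ZMod q))
      = p * (p * q) := by
    rw [← cardB]; exact Nat.card_congr AddSubgroup.topEquiv.toEquiv
  have hNker_ne : N.ker ≠ ⊤ := by
    intro h
    apply hf1
    refine DFunLike.ext _ _ fun b => ?_
    have hb : b ∈ N.ker := h ▸ AddSubgroup.mem_top b
    have := AddMonoidHom.mem_ker.1 hb
    rw [hNapp, sub_eq_zero] at this
    rw [this, addAut_one_apply]
  have cardNker : Nat.card ↥N.ker = p * q := by
    have hd1 : Nat.card ↥N.ker ∣ p * (p * q) := by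
      rw [← htopcard]
      exact AddSubgroup.card_dvd_of_le le_top
    have hd2 : p * q ∣ Nat.card ↥N.ker := by
      rw [← cardK]
      exact AddSubgroup.card_dvd_of_le hKle
    obtain ⟨d, hd⟩ := hd2
    have hddvd : d ∣ p := by
      have h1 : p * (p * q) = p * q * p := by ring
      rw [h1, hd] at hd1
      have hpos : 0 < p * q := Nat.mul_pos hp.pos hq.pos
      exact (Nat.mul_dvd_mul_iff_left hpos).1 hd1
    rcases (Nat.Prime.eq_one_or_self_of_dvd hp d hddvd) with h | h
    · rw [hd, h, mul_one]
    · exfalso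
      apply hNker_ne
      apply AddSubgroup.eq_top_of_card_eq
      rw [hd, h, cardB]
      ring
  have hKeq : K = N.ker := by
    have hsub : (K : Set (ZMod p × ZMod p × ZMod q)) ⊆ N.ker := hKle
    have hcle : (N.ker : Set (ZMod p × ZMod p × ZMod q)).ncard
        ≤ (K : Set (ZMod p × ZMod p × ZMod q)).ncard := by
      rw [← Nat.card_coe_set_eq, ← Nat.card_coe_set_eq]
      have e1 : Nat.card ↑(K : Set (ZMod p × ZMod p × ZMod q)) = p * q := cardK
      have e2 : Nat.card ↑(N.ker : Set (ZMod p × ZMod p × ZMod q)) = p * q := cardNker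
      rw [e1, e2]
    exact SetLike.coe_injective (Set.eq_of_subset_of_ncard_le hsub hcle (Set.toFinite _))
  have hmemKiffN : ∀ b, b ∈ K ↔ N b = 0 := by
    intro b
    rw [hKeq]
    exact AddMonoidHom.mem_ker
  -- the range of N
  have cardRangeN : Nat.card ↥N.range = p := by
    have h1 := AddSubgroup.card_eq_card_quotient_mul_card_addSubgroup N.ker
    have h2 : Nat.card ((ZMod p × ZMod p × ZMod q) ⧸ N.ker) = Nat.card ↥N.range :=
      Nat.card_congr (QuotientAddGroup.quotientKerEquivRange N).toEquiv
    rw [h2, cardNker, cardB] at h1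
    have hpos : 0 < p * q := Nat.mul_pos hp.pos hq.pos
    have h3 : p * (p * q) = p * q * p := by ring
    rw [h3] at h1
    exact (Nat.eq_of_mul_eq_mul_left hpos (by linarith [h1])).symm
  set w : ZMod p × ZMod p × ZMod q := N a₀ with hwdef
  have hw0 : w ≠ 0 := by
    intro h
    exact ha₀ ((hmemKiffN a₀).2 h)
  have hwp : p • w = 0 := by
    haveI : Fintype ↥N.range := Fintype.ofFinite _
    have hmem : w ∈ N.range := ⟨a₀, rfl⟩
    have h1 : Fintype.card ↥N.range • (⟨w, hmem⟩ : ↥N.range) = 0 := card_nsmul_eq_zero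
    have h2 : Fintype.card ↥N.range = p := by rw [← Nat.card_eq_fintype_card, cardRangeN]
    rw [h2] at h1
    calc p • w = N.range.subtype (p • ⟨w, hmem⟩) := (map_nsmul N.range.subtype p ⟨w, hmem⟩).symm
    _ = 0 := by rw [h1, map_zero]
  have hordw : addOrderOf w = p := addOrderOf_eq_prime hwp hw0
  have hrange_eq : N.range = AddSubgroup.zmultiples w := by
    have hle : AddSubgroup.zmultiples w ≤ N.range :=
      AddSubgroup.zmultiples_le.2 ⟨a₀, rfl⟩
    have hcle : (N.range : Set (ZMod p × ZMod p × ZMod q)).ncard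
        ≤ (AddSubgroup.zmultiples w : Set (ZMod p × ZMod p × ZMod q)).ncard := by
      rw [← Nat.card_coe_set_eq, ← Nat.card_coe_set_eq]
      have e1 : Nat.card ↑(AddSubgroup.zmultiples w : Set (ZMod p × ZMod p × ZMod q)) = p := by
        have := Nat.card_zmultiples w
        rw [hordw] at this
        exact this
      have e2 : Nat.card ↑(N.range : Set (ZMod p × ZMod p × ZMod q)) = p := cardRangeN
      rw [e1, e2]
    exact (SetLike.coe_injective
      (Set.eq_of_subset_of_ncard_le hle hcle (Set.toFinite _))).symm
  have hNmem : ∀ b, ∃ n : ℤ, N b = n • w := by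
    intro b
    have : N b ∈ AddSubgroup.zmultiples w := by
      rw [← hrange_eq]; exact ⟨b, rfl⟩
    obtain ⟨k, hk⟩ := AddSubgroup.mem_zmultiples_iff.1 this
    exact ⟨k, hk.symm⟩
  -- N ∘ N = 0
  have hNw : N w = 0 := by
    obtain ⟨n, hn⟩ := hNmem w
    have hfw : f w = w + n • w := by rw [hfNb, hn]
    have hiter : ∀ j : ℕ, (f ^ j) w = ((1 + n) ^ j) • w := by
      intro j
      induction j with
      | zero => rw [pow_zero, pow_zero, one_smul]; rfl
      | succ k ih =>
        have h1 : f ^ (k+1) = f ^ k * f := pow_succ f k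
        rw [h1, addAut_mul_apply, hfw]
        have h2 : w + n • w = (1 + n) • w := by rw [add_zsmul, one_zsmul]
        rw [h2, map_zsmul, ih, smul_smul, ← pow_succ']
    have h3 : ((1 + n) ^ p) • w = ((1 : ℤ)) • w := by
      rw [← hiter, hfp, one_zsmul]; rfl
    have h4 := zsmul_inj p w hordw h3
    push_cast at h4
    rw [ZMod.pow_card] at h4
    have h5 : ((n : ZMod p)) = 0 := add_eq_left.1 h4
    have h6 : (p : ℤ) ∣ n := (ZMod.intCast_zmod_eq_zero_iff_dvd n p).1 h5
    obtain ⟨d, hdd⟩ := h6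
    rw [hn, hdd, mul_comm, mul_zsmul, natCast_zsmul, hwp, smul_zero]
  have hN2 : ∀ b, N (N b) = 0 := by
    intro b
    obtain ⟨n, hn⟩ := hNmem b
    rw [hn, map_zsmul, hNw, smul_zero]
  have hwK : w ∈ K := (hmemKiffN w).2 hNw
  have hNbK : ∀ b, N b ∈ K := by
    intro b
    obtain ⟨n, hn⟩ := hNmem b
    rw [hn]
    exact zsmul_mem hwK n
  -- psi
  have hψex : ∀ b, ∃ x : ZMod p, N b = x.val • w := by
    intro b
    obtain ⟨n, hn⟩ := hNmem b
    refine ⟨(n : ZMod p), ?_⟩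
    rw [hn]
    have h1 : ((((n : ZMod p)).val : ℤ) : ZMod p) = ((n : ZMod p)) := by
      push_cast [val_natCast_zmod]; rfl
    have := zsmul_congr p w hwp (m := n) (n := (((n : ZMod p)).val : ℤ)) (by rw [h1])
    rw [this, natCast_zsmul]
  choose ψ hψ using hψex
  have hψ0 : ∀ b, ψ b = 0 ↔ b ∈ K := by
    intro b
    rw [hmemKiffN b, hψ b]
    constructor
    · intro h
      rw [h, ZMod.val_zero, zero_smul]
    · intro h
      have h1 := nsmul_inj p w hordw (m := (ψ b).val) (n := 0) (by rw [h, zero_smul])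
      rw [val_natCast_zmod] at h1
      simpa using h1
  have hψadd : ∀ a b, ψ (a + b) = ψ a + ψ b := by
    intro a b
    have h1 : N (a + b) = N a + N b := map_add N a b
    rw [hψ, hψ, hψ, ← add_nsmul] at h1
    have h2 := nsmul_inj p w hordw h1
    rw [val_natCast_zmod] at h2
    push_cast [val_natCast_zmod] at h2
    exact h2
  -- phi
  have hzpowf : ∀ a : Op g, ∃ x : ZMod p, lam g hg a = f ^ x.val := by
    have hle : Subgroup.zpowers f ≤ (lam g hg).range :=
      Subgroup.zpowers_le.2 ⟨mkOp g a₀, rfl⟩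
    have heq : (lam g hg).range = Subgroup.zpowers f := by
      have hcle : ((lam g hg).range : Set (AddAut (ZMod p × ZMod p × ZMod q))).ncard
          ≤ ((Subgroup.zpowers f : Subgroup _) : Set (AddAut (ZMod p × ZMod p × ZMod q))).ncard := by
        rw [← Nat.card_coe_set_eq, ← Nat.card_coe_set_eq]
        have e1 : Nat.card ↑((Subgroup.zpowers f : Subgroup _) :
            Set (AddAut (ZMod p × ZMod p × ZMod q))) = p := by
          have := Nat.card_zpowers f
          rw [hordf] at this
          exact this
        have e2 : Nat.card ↑(((lam g hg).range : Subgroup _) :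
            Set (AddAut (ZMod p × ZMod p × ZMod q))) = p := cardRange
        rw [e1, e2]
      exact (SetLike.coe_injective
        (Set.eq_of_subset_of_ncard_le hle hcle (Set.toFinite _))).symm
    intro a
    have hmem : lam g hg a ∈ Subgroup.zpowers f := by
      rw [← heq]; exact ⟨a, rfl⟩
    obtain ⟨k, hk⟩ := Subgroup.mem_zpowers_iff.1 hmem
    refine ⟨((k : ℤ) : ZMod p), ?_⟩
    rw [← hk]
    symm
    have hd : (p : ℤ) ∣ ((((k : ℤ) : ZMod p)).val : ℤ) - k := by
      have h1 : (((((k : ℤ) : ZMod p)).val : ℤ) : ZMod p) = (k : ZMod p) := by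
        push_cast [val_natCast_zmod]
        rfl
      have h2 : ((((((k : ℤ) : ZMod p)).val : ℤ) - k : ℤ) : ZMod p) = 0 := by
        push_cast at h1 ⊢
        rw [h1]; ring
      exact (ZMod.intCast_zmod_eq_zero_iff_dvd _ _).1 h2
    obtain ⟨d, hdd⟩ := hd
    have h3 : ((((k : ℤ) : ZMod p)).val : ℤ) = k + p * d := by linarith [hdd]
    calc f ^ ((((k : ℤ) : ZMod p)).val) = f ^ (((((k : ℤ) : ZMod p)).val : ℤ)) := (zpow_natCast f _).symm
    _ = f ^ (k + (p : ℤ) * d) := by rw [h3]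
    _ = f ^ k * (f ^ (p : ℤ)) ^ d := by rw [zpow_add, zpow_mul]
    _ = f ^ k := by
        have : f ^ (p : ℤ) = 1 := by rw [zpow_natCast, hfp]
        rw [this, one_zpow, mul_one]
  choose φ0 hφ0spec using hzpowf
  set φ : ZMod p × ZMod p × ZMod q → ZMod p := fun b => φ0 (mkOp g b) with hφdef
  have hφ : ∀ b, lam g hg (mkOp g b) = f ^ (φ b).val := fun b => hφ0spec (mkOp g b)
  have hfinj : ∀ m n : ℕ, f ^ m = f ^ n → (m : ZMod p) = (n : ZMod p) := by
    intro m n h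
    have := pow_eq_pow_iff_modEq.1 h
    rw [hordf] at this
    exact (ZMod.natCast_eq_natCast_iff _ _ _).2 this
  have hφK : ∀ b, φ b = 0 ↔ b ∈ K := by
    intro b
    constructor
    · intro h
      have h1 := hφ b
      rw [h, ZMod.val_zero, pow_zero] at h1
      have := (hkerK (mkOp g b)).1 h1
      rwa [ofOp_mkOp] at this
    · intro h
      have h1 : lam g hg (mkOp g b) = 1 := (hkerK _).2 (by rw [ofOp_mkOp]; exact h)
      have h2 : f ^ (φ b).val = f ^ (0 : ℕ) := by rw [pow_zero, ← h1, hφ b]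
      have h3 := hfinj _ _ h2
      rw [val_natCast_zmod] at h3
      simpa using h3
  -- the key formula for lam in terms of N
  have hlam_pow : ∀ (j : ℕ) (b), (f ^ j) b = b + j • N b := by
    intro j
    induction j with
    | zero => intro b; rw [pow_zero, zero_smul, add_zero]; rfl
    | succ k ih =>
      intro b
      rw [pow_succ, addAut_mul_apply, hfNb b, map_add, ih, ih, hN2 b, smul_zero, add_zero,
        succ_nsmul]
      abel
  have hlam_formula : ∀ a b, lam g hg (mkOp g a) b = b + (φ a).val • N b := by
    intro a b
    rw [hφ a, hlam_pow]
  have hg_formula0 : ∀ a b, g a b = a + b + (φ a).val • N b := by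
    intro a b
    have h1 := g_eq_add_lam g hg (mkOp g a) b
    rw [ofOp_mkOp] at h1
    rw [h1, hlam_formula, add_assoc]
  -- phi is additive
  have hφshift : ∀ a k, k ∈ K → φ (a + k) = φ a := by
    intro a k hk
    have hk' : lam g hg ((mkOp g a)⁻¹) k ∈ K := hKinv _ k hk
    set k' : ZMod p × ZMod p × ZMod q := lam g hg ((mkOp g a)⁻¹) k with hk'def
    have hlamk : lam g hg (mkOp g a) k' = k := by
      rw [hk'def]
      have : lam g hg (mkOp g a) (lam g hg ((mkOp g a)⁻¹) k)
          = (lam g hg (mkOp g a) * lam g hg ((mkOp g a)⁻¹)) k := (addAut_mul_apply _ _ _ _).symm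
      rw [this, ← map_mul, mul_inv_cancel, map_one, addAut_one_apply]
    have hsum : a + k = g a k' := by
      have h1 := g_eq_add_lam g hg (mkOp g a) k'
      rw [ofOp_mkOp, hlamk] at h1
      exact h1.symm
    have hmul : mkOp g (a + k) = mkOp g a * mkOp g k' := by
      have h1 : ofOp g (mkOp g a * mkOp g k') = a + k := by
        rw [op_mul' g hg, ofOp_mkOp, ofOp_mkOp, ← hsum]
      calc mkOp g (a + k) = mkOp g (ofOp g (mkOp g a * mkOp g k')) := by rw [h1]
      _ = mkOp g a * mkOp g k' := mkOp_ofOp g _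
    have hlam1 : lam g hg (mkOp g k') = 1 := (hkerK _).2 (by rw [ofOp_mkOp]; exact hk')
    have h2 : lam g hg (mkOp g (a + k)) = lam g hg (mkOp g a) := by
      rw [hmul, map_mul, hlam1, mul_one]
    have h3 : f ^ (φ (a + k)).val = f ^ (φ a).val := by
      rw [← hφ, ← hφ, h2]
    have h4 := hfinj _ _ h3
    rwa [val_natCast_zmod, val_natCast_zmod] at h4
  have hφadd : ∀ a b, φ (a + b) = φ a + φ b := by
    intro a b
    set cc : ZMod p × ZMod p × ZMod q := (φ a).val • N b with hcc
    have hccK : cc ∈ K := nsmul_mem (hNbK b) _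
    have hNx : N (b - cc) = N b := by
      rw [map_sub, hcc, map_nsmul, hN2, smul_zero, sub_zero]
    have hx : lam g hg (mkOp g a) (b - cc) = b := by
      rw [hlam_formula, hNx, hcc]
      abel
    have hab : a + b = g a (b - cc) := by
      have h1 := g_eq_add_lam g hg (mkOp g a) (b - cc)
      rw [ofOp_mkOp, hx] at h1
      exact h1.symm
    have hmul : mkOp g (a + b) = mkOp g a * mkOp g (b - cc) := by
      have h1 : ofOp g (mkOp g a * mkOp g (b - cc)) = a + b := by
        rw [op_mul' g hg, ofOp_mkOp, ofOp_mkOp, ← hab]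
      calc mkOp g (a + b) = mkOp g (ofOp g (mkOp g a * mkOp g (b - cc))) := by rw [h1]
      _ = _ := mkOp_ofOp g _
    have h2 : f ^ (φ (a+b)).val = f ^ ((φ a).val + (φ (b - cc)).val) := by
      rw [← hφ, hmul, map_mul, hφ a, hφ (b - cc), pow_add]
    have h3 := hfinj _ _ h2
    rw [val_natCast_zmod] at h3
    push_cast [val_natCast_zmod] at h3
    have h4 : φ (b - cc) = φ b := by
      have : b - cc = b + (-cc) := by abel
      rw [this]
      exact hφshift b (-cc) (neg_mem hccK)
    rw [h4] at h3
    exact h3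
  -- linearity helpers
  have hφ0' : φ 0 = 0 := (hφK 0).2 (zero_mem K)
  have hψ0'' : ψ 0 = 0 := (hψ0 0).2 (zero_mem K)
  have hφsmul : ∀ (n : ℕ) (a), φ (n • a) = n • φ a := by
    intro n a
    induction n with
    | zero => rw [zero_smul, zero_smul, hφ0']
    | succ k ih => rw [succ_nsmul, succ_nsmul, hφadd, ih]
  have hψsmul : ∀ (n : ℕ) (a), ψ (n • a) = n • ψ a := by
    intro n a
    induction n with
    | zero => rw [zero_smul, zero_smul, hψ0'']
    | succ k ih => rw [succ_nsmul, succ_nsmul, hψadd, ih]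
  have ha₀φ : φ a₀ ≠ 0 := fun h => ha₀ ((hφK a₀).1 h)
  have ha₀ψ : ψ a₀ ≠ 0 := fun h => ha₀ ((hψ0 a₀).1 h)
  set u : ZMod p := ψ a₀ * (φ a₀)⁻¹ with hu
  have hu0 : u ≠ 0 := mul_ne_zero ha₀ψ (inv_ne_zero ha₀φ)
  have hψφ : ∀ b, ψ b = u * φ b := by
    intro b
    set m : ZMod p := φ b * (φ a₀)⁻¹ with hm
    have h2 : φ (b - m.val • a₀) + φ (m.val • a₀) = φ b := by
      rw [← hφadd, sub_add_cancel]
    have h3 : φ (m.val • a₀) = φ b := by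
      rw [hφsmul, nsmul_eq_mul, val_natCast_zmod, hm, mul_assoc, inv_mul_cancel₀ ha₀φ, mul_one]
    rw [h3] at h2
    have h1 : φ (b - m.val • a₀) = 0 := by
      have h2' : φ (b - m.val • a₀) + φ b = 0 + φ b := by rw [zero_add]; exact h2
      exact add_right_cancel h2'
    have hbK : b - m.val • a₀ ∈ K := (hφK _).1 h1
    have h4 : ψ (b - m.val • a₀) = 0 := (hψ0 _).2 hbK
    have h5 : ψ b = ψ (b - m.val • a₀) + ψ (m.val • a₀) := by rw [← hψadd, sub_add_cancel]
    rw [h4, zero_add, hψsmul, nsmul_eq_mul, val_natCast_zmod] at h5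
    rw [h5, hm, hu]; ring
  -- the basis vector e₁
  set e₁ : ZMod p × ZMod p × ZMod q := u.val • w with he₁
  have he₁K : e₁ ∈ K := nsmul_mem hwK _
  have he₁p : p • e₁ = 0 := by rw [he₁, smul_comm, hwp, smul_zero]
  have he₁0 : e₁ ≠ 0 := by
    intro h
    have h1 := nsmul_inj p w hordw (m := u.val) (n := 0) (by rw [zero_smul, ← he₁, h])
    rw [val_natCast_zmod] at h1
    exact hu0 (by simpa using h1)
  have horde₁ : addOrderOf e₁ = p := addOrderOf_eq_prime he₁p he₁0
  have hφe₁ : φ e₁ = 0 := (hφK _).2 he₁K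
  -- the master multiplication formula
  have hg_formula : ∀ a b, g a b = a + b + (φ a * φ b).val • e₁ := by
    intro a b
    rw [hg_formula0 a b, hψ b]
    congr 1
    rw [smul_smul, he₁, smul_smul]
    apply nsmul_congr p w hwp
    push_cast [val_natCast_zmod]
    rw [hψφ b, hu]; ring
  -- exponent of the group
  have hexp : ∀ x : ZMod p × ZMod p × ZMod q, (p * q) • x = 0 := by
    intro x
    have h0 : (p*q) • x = ((p*q) • x.1, (p*q) • x.2.1, (p*q) • x.2.2) := rfl
    have h1 : (p*q) • x.1 = 0 := by
      rw [nsmul_eq_mul, Nat.cast_mul, ZMod.natCast_self, zero_mul, zero_mul]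
    have h2 : (p*q) • x.2.1 = 0 := by
      rw [nsmul_eq_mul, Nat.cast_mul, ZMod.natCast_self, zero_mul, zero_mul]
    have h3 : (p*q) • x.2.2 = 0 := by
      rw [nsmul_eq_mul, Nat.cast_mul, ZMod.natCast_self, mul_zero, zero_mul]
    rw [h0, h1, h2, h3]; rfl
  -- the basis vector e₂
  set b₀ : ZMod p × ZMod p × ZMod q := q • a₀ with hb₀
  have hb₀p : p • b₀ = 0 := by rw [hb₀, ← mul_smul]; exact hexp a₀
  have hφb₀ : φ b₀ = (q : ZMod p) * φ a₀ := by rw [hb₀, hφsmul, nsmul_eq_mul]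
  have hφb₀0 : φ b₀ ≠ 0 := by rw [hφb₀]; exact mul_ne_zero hqp0 ha₀φ
  set e₂ : ZMod p × ZMod p × ZMod q := ((φ b₀)⁻¹).val • b₀ with he₂
  have he₂p : p • e₂ = 0 := by rw [he₂, smul_comm, hb₀p, smul_zero]
  have hφe₂ : φ e₂ = 1 := by
    rw [he₂, hφsmul, nsmul_eq_mul, val_natCast_zmod, inv_mul_cancel₀ hφb₀0]
  -- the basis vector e₃
  set e₃ : ZMod p × ZMod p × ZMod q := (0,0,1) with he₃
  have he₃q : q • e₃ = 0 := hq1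
  have hφe₃ : φ e₃ = 0 := by
    have h1 : q • φ e₃ = 0 := by rw [← hφsmul, he₃q, hφ0']
    rw [nsmul_eq_mul] at h1
    rcases mul_eq_zero.1 h1 with h | h
    · exact absurd h hqp0
    · exact h
  -- the additive equivalence
  set F : ZMod p × ZMod p × ZMod q → ZMod p × ZMod p × ZMod q :=
    fun t => t.1.val • e₁ + t.2.1.val • e₂ + t.2.2.val • e₃ with hFdef
  have hφF : ∀ t, φ (F t) = t.2.1 := by
    intro t
    show φ (t.1.val • e₁ + t.2.1.val • e₂ + t.2.2.val • e₃) = t.2.1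
    rw [hφadd, hφadd, hφsmul t.1.val e₁, hφsmul t.2.1.val e₂, hφsmul t.2.2.val e₃,
      hφe₁, hφe₂, hφe₃, smul_zero, smul_zero,
      zero_add, add_zero, nsmul_eq_mul, mul_one, val_natCast_zmod]
  have hFadd : ∀ x y, F (x + y) = F x + F y := by
    intro x y
    show (x+y).1.val • e₁ + (x+y).2.1.val • e₂ + (x+y).2.2.val • e₃
      = (x.1.val • e₁ + x.2.1.val • e₂ + x.2.2.val • e₃)
        + (y.1.val • e₁ + y.2.1.val • e₂ + y.2.2.val • e₃)
    have h1 : (x + y).1.val • e₁ = x.1.val • e₁ + y.1.val • e₁ := by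
      rw [← add_nsmul]
      exact nsmul_congr p e₁ he₁p (by push_cast [val_natCast_zmod]; rfl)
    have h2 : (x + y).2.1.val • e₂ = x.2.1.val • e₂ + y.2.1.val • e₂ := by
      rw [← add_nsmul]
      exact nsmul_congr p e₂ he₂p (by push_cast [val_natCast_zmod]; rfl)
    have h3 : (x + y).2.2.val • e₃ = x.2.2.val • e₃ + y.2.2.val • e₃ := by
      rw [← add_nsmul]
      exact nsmul_congr q e₃ he₃q (by push_cast [val_natCast_zmod]; rfl)
    rw [h1, h2, h3]; abel
  have hF0 : F 0 = 0 := by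
    show (0 : ZMod p × ZMod p × ZMod q).1.val • e₁ + _ + _ = 0
    simp [ZMod.val_zero]
  have hFneg : ∀ t, F (-t) = - F t := by
    intro t
    have h1 := hFadd (-t) t
    rw [neg_add_cancel, hF0] at h1
    exact eq_neg_of_add_eq_zero_left h1.symm
  have hFinj : Function.Injective F := by
    intro x y hxy
    have hd : F (x - y) = 0 := by
      rw [sub_eq_add_neg, hFadd, hFneg, hxy, add_neg_cancel]
    set d : ZMod p × ZMod p × ZMod q := x - y with hdxy
    have h21 : d.2.1 = 0 := by rw [← hφF d, hd, hφ0']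
    have hrest : d.1.val • e₁ + d.2.2.val • e₃ = 0 := by
      have h4 : d.1.val • e₁ + d.2.1.val • e₂ + d.2.2.val • e₃ = 0 := hd
      rw [h21, ZMod.val_zero, zero_smul, add_zero] at h4
      exact h4
    have hq_rest : (q * d.1.val) • e₁ = 0 := by
      have h5 := congrArg (fun v => q • v) hrest
      change q • (d.1.val • e₁ + d.2.2.val • e₃) = q • 0 at h5
      rw [smul_add, smul_zero] at h5
      have h6 : q • (d.2.2.val • e₃) = 0 := by rw [smul_comm, he₃q, smul_zero]
      rw [h6, add_zero, smul_smul] at h5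
      exact h5
    have h7 : d.1 = 0 := by
      have h8 := nsmul_inj p e₁ horde₁ (m := q * d.1.val) (n := 0) (by rw [zero_smul, hq_rest])
      push_cast [val_natCast_zmod] at h8
      rcases mul_eq_zero.1 h8 with h | h
      · exact absurd h hqp0
      · exact h
    have h9 : d.2.2 = 0 := by
      have h10 : d.2.2.val • e₃ = 0 := by
        rw [h7, ZMod.val_zero, zero_smul, zero_add] at hrest
        exact hrest
      have h11 : d.2.2.val • e₃ = ((0 : ZMod p), (0:ZMod p), (d.2.2.val : ZMod q)) := by
        have h12 : d.2.2.val • ((0,0,1) : ZMod p × ZMod p × ZMod q)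
            = (d.2.2.val • (0:ZMod p), d.2.2.val • (0:ZMod p), d.2.2.val • (1:ZMod q)) := rfl
        rw [he₃, h12, smul_zero, nsmul_eq_mul, mul_one]
      rw [h11] at h10
      have h13 := congrArg (fun v => v.2.2) h10
      simp only at h13
      rwa [val_natCast_zmod] at h13
    have hd0 : d = 0 := by
      have h14 : d = (d.1, d.2.1, d.2.2) := rfl
      rw [h14, h7, h21, h9]; rfl
    have h15 : x - y = 0 := by rw [← hdxy]; exact hd0
    exact sub_eq_zero.1 h15
  have hFbij : Function.Bijective F :=
    (Nat.bijective_iff_injective_and_card F).2 ⟨hFinj, rfl⟩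
  have happ : ∀ x, F ((Equiv.ofBijective F hFbij).symm x) = x :=
    fun x => (Equiv.ofBijective F hFbij).apply_symm_apply x
  refine ⟨(Equiv.ofBijective F hFbij).symm, ?_, ?_⟩
  · intro a b
    apply hFinj
    rw [happ, hFadd, happ, happ]
  · intro a b
    apply hFinj
    rw [happ]
    set s : ZMod p × ZMod p × ZMod q := (Equiv.ofBijective F hFbij).symm a with hs
    set t' : ZMod p × ZMod p × ZMod q := (Equiv.ofBijective F hFbij).symm b with ht'
    have hsa : F s = a := happ a
    have htb : F t' = b := happ b
    have hcirc : circ8 p q s t' = s + t' + ((s.2.1 * t'.2.1 : ZMod p), 0, 0) := by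
      show ((s.1 + t'.1 + s.2.1 * t'.2.1, s.2.1 + t'.2.1, s.2.2 + t'.2.2) :
        ZMod p × ZMod p × ZMod q) = _
      have h16 : s + t' + (((s.2.1 * t'.2.1 : ZMod p), (0:ZMod p), (0:ZMod q)) :
          ZMod p × ZMod p × ZMod q)
          = (s.1 + t'.1 + s.2.1 * t'.2.1, s.2.1 + t'.2.1 + 0, s.2.2 + t'.2.2 + 0) := rfl
      rw [h16, add_zero, add_zero]
    have hFm : F ((s.2.1 * t'.2.1, 0, 0) : ZMod p × ZMod p × ZMod q)
        = (s.2.1 * t'.2.1).val • e₁ := by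
      show (s.2.1 * t'.2.1).val • e₁ + (0 : ZMod p).val • e₂ + (0 : ZMod q).val • e₃ = _
      rw [ZMod.val_zero, ZMod.val_zero, zero_smul, zero_smul, add_zero, add_zero]
    have hpa : φ a = s.2.1 := by rw [← hsa, hφF]
    have hpb : φ b = t'.2.1 := by rw [← htb, hφF]
    rw [hcirc, hFadd, hFadd, hFm, hsa, htb, hg_formula a b, hpa, hpb]

/-- Let `p, q` be distinct primes with `q ≢ 1 (mod p)`.  On `B = ℤ/p × ℤ/p × ℤ/q`,
`(x₁,x₂,x₃) ∘ (y₁,y₂,y₃) = (x₁ + y₁ + x₂ y₂, x₂ + y₂, x₃ + y₃)` makes `(B,+,∘)` a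
left brace with `|ker λ| = pq`, `(B,∘)` is abelian and isomorphic to
`ℤ/p × ℤ/p × ℤ/q`, and up to brace isomorphism it is the unique left brace with
additive group `ℤ/p × ℤ/p × ℤ/q` and `|ker λ| = pq`. -/
theorem stmt_8 (p q : ℕ) (hp : p.Prime) (hq : q.Prime) (hpq : p ≠ q)
    (hmod : ¬ q ≡ 1 [MOD p]) :
    IsLeftBrace (circ8 p q) ∧
    Nat.card ↥(kerLambda (circ8 p q)) = p * q ∧
    (∀ a b, circ8 p q a b = circ8 p q b a) ∧
    (∃ e : ZMod p × ZMod p × ZMod q ≃ ZMod p × ZMod p × ZMod q,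
      ∀ a b, e (circ8 p q a b) = e a + e b) ∧
    (∀ g : ZMod p × ZMod p × ZMod q → ZMod p × ZMod p × ZMod q → ZMod p × ZMod p × ZMod q,
      IsLeftBrace g → Nat.card ↥(kerLambda g) = p * q →
      ∃ e : ZMod p × ZMod p × ZMod q ≃ ZMod p × ZMod p × ZMod q,
        (∀ a b, e (a + b) = e a + e b) ∧
        ∀ a b, e (g a b) = circ8 p q (e a) (e b)) := by
  haveI fp : Fact p.Prime := ⟨hp⟩
  haveI fq : Fact q.Prime := ⟨hq⟩
  haveI : NeZero p := ⟨hp.ne_zero⟩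
  haveI : NeZero q := ⟨hq.ne_zero⟩
  have hbrace : IsLeftBrace (circ8 p q) := by
    refine ⟨?_, ?_, ?_, ?_, ?_⟩
    · intro a b c
      simp only [circ8, Prod.mk.injEq]
      refine ⟨by ring, by ring, by ring⟩
    · intro a
      simp only [circ8]
      have : ((0 : ZMod p × ZMod p × ZMod q).1, (0 : ZMod p × ZMod p × ZMod q).2.1,
        (0 : ZMod p × ZMod p × ZMod q).2.2) = ((0 : ZMod p), (0 : ZMod p), (0 : ZMod q)) := rfl
      show ((0:ZMod p) + a.1 + (0:ZMod p) * a.2.1, (0:ZMod p) + a.2.1, (0:ZMod q) + a.2.2) = a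
      rw [zero_mul, add_zero, zero_add, zero_add, zero_add]
    · intro a
      show (a.1 + (0:ZMod p) + a.2.1 * (0:ZMod p), a.2.1 + (0:ZMod p), a.2.2 + (0:ZMod q)) = a
      rw [mul_zero, add_zero, add_zero, add_zero, add_zero]
    · intro a
      refine ⟨(-a.1 + a.2.1 * a.2.1, -a.2.1, -a.2.2), ?_⟩
      show ((-a.1 + a.2.1 * a.2.1) + a.1 + (-a.2.1) * a.2.1, -a.2.1 + a.2.1, -a.2.2 + a.2.2)
        = 0
      have h0 : ((0 : ZMod p), (0 : ZMod p), (0 : ZMod q)) = (0 : ZMod p × ZMod p × ZMod q) := rfl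
      rw [← h0, Prod.mk.injEq, Prod.mk.injEq]
      refine ⟨by ring, by ring, by ring⟩
    · intro a b c
      show (a.1 + (b+c).1 + a.2.1 * (b+c).2.1, a.2.1 + (b+c).2.1, a.2.2 + (b+c).2.2)
        = ((a.1 + b.1 + a.2.1 * b.2.1, a.2.1 + b.2.1, a.2.2 + b.2.2) : ZMod p × ZMod p × ZMod q)
          - a + (a.1 + c.1 + a.2.1 * c.2.1, a.2.1 + c.2.1, a.2.2 + c.2.2)
      have h1 : ((a.1 + b.1 + a.2.1 * b.2.1, a.2.1 + b.2.1, a.2.2 + b.2.2) :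
          ZMod p × ZMod p × ZMod q) - a + (a.1 + c.1 + a.2.1 * c.2.1, a.2.1 + c.2.1, a.2.2 + c.2.2)
          = (a.1 + b.1 + a.2.1 * b.2.1 - a.1 + (a.1 + c.1 + a.2.1 * c.2.1),
             a.2.1 + b.2.1 - a.2.1 + (a.2.1 + c.2.1), a.2.2 + b.2.2 - a.2.2 + (a.2.2 + c.2.2)) := rfl
      rw [h1, Prod.mk.injEq, Prod.mk.injEq]
      have h2 : (b + c).1 = b.1 + c.1 := rfl
      have h3 : (b + c).2.1 = b.2.1 + c.2.1 := rfl
      have h4 : (b + c).2.2 = b.2.2 + c.2.2 := rfl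
      rw [h2, h3, h4]
      refine ⟨by ring, by ring, by ring⟩
  refine ⟨hbrace, ?_, ?_, ?_, ?_⟩
  · -- cardinality of the kernel
    have hker : kerLambda (circ8 p q) = {a : ZMod p × ZMod p × ZMod q | a.2.1 = 0} := by
      ext a
      constructor
      · intro h
        have hb := h ((0, 1, 0) : ZMod p × ZMod p × ZMod q)
        have h1 := congrArg (fun v => v.1) hb
        simp only [circ8] at h1
        have h2 : (a + ((0,1,0) : ZMod p × ZMod p × ZMod q)).1 = a.1 + 0 := rfl
        rw [h2] at h1
        have h3 : a.1 + (0:ZMod p) + a.2.1 * 1 = a.1 + 0 := h1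
        rw [mul_one] at h3
        rw [add_zero] at h3
        exact add_eq_left.1 h3
      · intro h b
        show (a.1 + b.1 + a.2.1 * b.2.1, a.2.1 + b.2.1, a.2.2 + b.2.2) = a + b
        have h5 : a + b = (a.1 + b.1, a.2.1 + b.2.1, a.2.2 + b.2.2) := rfl
        rw [h5, h, zero_mul, add_zero]
    rw [hker]
    have hE : ↥{a : ZMod p × ZMod p × ZMod q | a.2.1 = 0} ≃ ZMod p × ZMod q := by
      refine ⟨fun x => (x.1.1, x.1.2.2), fun y => ⟨(y.1, 0, y.2), rfl⟩, ?_, ?_⟩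
      · intro x
        refine Subtype.ext ?_
        have h1 : x.1 = (x.1.1, x.1.2.1, x.1.2.2) := rfl
        have h2 : x.1.2.1 = 0 := x.2
        rw [h1, h2]
      · intro y
        rfl
    rw [Nat.card_congr hE, Nat.card_prod, Nat.card_zmod, Nat.card_zmod]
  · -- commutativity
    intro a b
    simp only [circ8, Prod.mk.injEq]
    refine ⟨by ring, by ring, by ring⟩
  · -- abelian group isomorphism
    have hp2 : p ≠ 2 := by
      rintro rfl
      rcases hq.eq_two_or_odd with h | h
      · exact hpq h.symm
      · exact hmod h
    have h20 : (2 : ZMod p) ≠ 0 := by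
      intro h
      have h1 : ((2 : ℕ) : ZMod p) = 0 := by push_cast; exact h
      rw [ZMod.natCast_eq_zero_iff] at h1
      exact hp2 ((Nat.prime_dvd_prime_iff_eq hp Nat.prime_two).1 h1)
    set c : ZMod p := (2 : ZMod p)⁻¹ with hc
    have h2c : (2 : ZMod p) * c = 1 := mul_inv_cancel₀ h20
    refine ⟨⟨fun x => (x.1 - c * x.2.1 * x.2.1, x.2.1, x.2.2),
             fun x => (x.1 + c * x.2.1 * x.2.1, x.2.1, x.2.2), ?_, ?_⟩, ?_⟩
    · intro x
      show (x.1 - c * x.2.1 * x.2.1 + c * x.2.1 * x.2.1, x.2.1, x.2.2) = x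
      have hx : x = (x.1, x.2.1, x.2.2) := rfl
      conv_rhs => rw [hx]
      rw [Prod.mk.injEq, Prod.mk.injEq]
      refine ⟨by ring, rfl, rfl⟩
    · intro x
      show (x.1 + c * x.2.1 * x.2.1 - c * x.2.1 * x.2.1, x.2.1, x.2.2) = x
      have hx : x = (x.1, x.2.1, x.2.2) := rfl
      conv_rhs => rw [hx]
      rw [Prod.mk.injEq, Prod.mk.injEq]
      refine ⟨by ring, rfl, rfl⟩
    · intro a b
      show ((circ8 p q a b).1 - c * (circ8 p q a b).2.1 * (circ8 p q a b).2.1,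
          (circ8 p q a b).2.1, (circ8 p q a b).2.2)
        = ((a.1 - c * a.2.1 * a.2.1, a.2.1, a.2.2) : ZMod p × ZMod p × ZMod q)
          + (b.1 - c * b.2.1 * b.2.1, b.2.1, b.2.2)
      have h1 : (circ8 p q a b).1 = a.1 + b.1 + a.2.1 * b.2.1 := rfl
      have h2 : (circ8 p q a b).2.1 = a.2.1 + b.2.1 := rfl
      have h3 : (circ8 p q a b).2.2 = a.2.2 + b.2.2 := rfl
      have h4 : ((a.1 - c * a.2.1 * a.2.1, a.2.1, a.2.2) : ZMod p × ZMod p × ZMod q)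
          + (b.1 - c * b.2.1 * b.2.1, b.2.1, b.2.2)
          = (a.1 - c * a.2.1 * a.2.1 + (b.1 - c * b.2.1 * b.2.1), a.2.1 + b.2.1,
              a.2.2 + b.2.2) := rfl
      rw [h1, h2, h3, h4, Prod.mk.injEq, Prod.mk.injEq]
      refine ⟨?_, rfl, rfl⟩
      linear_combination (- (a.2.1 * b.2.1)) * h2c
  · -- uniqueness
    intro g hg hcard
    exact unique_brace p q hp hq hpq hmod g hg hcard
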